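/- Let (X, d) be a metric space with its Borel σ-algebra, let μ be a finite signed Borel measure on X, let t₁, …, tₛ ∈ X, let r > 0 be such that the closed balls B̄(tₖ, r) are pairwise disjoint, and let ε₂ > 0. Let η : X → ℝ be a bounded Borel function such that |η(x)| ≤ 1 − ε₂·d(x, tₖ)² for every k and every x ∈ B̄(tₖ, r), and |η(x)| ≤ 1 − ε₂·r² for every x in the far region F_r := X \ ⋃ₖ B̄(tₖ, r). Then |μ|(X) − ∫ η dμ ≥ ε₂·r²·|μ|(F_r) + ε₂·Σ_{k=1}^{s} ∫_{B̄(tₖ,r)} d(x, tₖ)² d|μ|(x). -/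

import Mathlib

open MeasureTheory Metric

/-- Integral of a real function against a finite signed measure, via the
Jordan decomposition: `∫ f dμ = ∫ f dμ⁺ - ∫ f dμ⁻`. -/
noncomputable def signedIntegral {X : Type*} [MeasurableSpace X]
    (μ : SignedMeasure X) (f : X → ℝ) : ℝ :=
  (∫ x, f x ∂μ.toJordanDecomposition.posPart) -
    ∫ x, f x ∂μ.toJordanDecomposition.negPart

theorem stmt_2 {X : Type*} [MetricSpace X] [MeasurableSpace X] [BorelSpace X]
    (μ : SignedMeasure X) (s : ℕ) (t : Fin s → X) (r : ℝ) (hr : 0 < r)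
    (hdisj : Pairwise fun k l => Disjoint (closedBall (t k) r) (closedBall (t l) r))
    (ε₂ : ℝ) (hε₂ : 0 < ε₂)
    (η : X → ℝ) (hηmeas : Measurable η) (hηbdd : ∃ M, ∀ x, |η x| ≤ M)
    (hnear : ∀ k, ∀ x ∈ closedBall (t k) r, |η x| ≤ 1 - ε₂ * dist x (t k) ^ 2)
    (hfar : ∀ x ∈ (⋃ k, closedBall (t k) r)ᶜ, |η x| ≤ 1 - ε₂ * r ^ 2) :
    (μ.totalVariation Set.univ).toReal - signedIntegral μ η ≥
      ε₂ * r ^ 2 * (μ.totalVariation ((⋃ k, closedBall (t k) r)ᶜ)).toReal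
      + ε₂ * ∑ k, ∫ x in closedBall (t k) r, dist x (t k) ^ 2 ∂μ.totalVariation := by
  classical
  obtain ⟨M, hM⟩ := hηbdd
  set ν := μ.totalVariation with hνdef
  set p := μ.toJordanDecomposition.posPart with hp
  set n := μ.toJordanDecomposition.negPart with hn
  have hνpn : ν = p + n := rfl
  haveI : IsFiniteMeasure ν := by rw [hνpn]; infer_instance
  have hBmeas : ∀ k, MeasurableSet (closedBall (t k) r) :=
    fun k => measurableSet_closedBall
  set U := ⋃ k, closedBall (t k) r with hU
  have hUmeas : MeasurableSet U := MeasurableSet.iUnion fun k => hBmeas k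
  have hintgen : ∀ (m : Measure X) [IsFiniteMeasure m], Integrable η m := by
    intro m _
    refine ⟨hηmeas.aestronglyMeasurable, ?_⟩
    refine HasFiniteIntegral.of_bounded (C := M) ?_
    exact Filter.Eventually.of_forall fun x => by
      simpa [Real.norm_eq_abs] using hM x
  have hintη : Integrable η ν := hintgen ν
  have hintabs : Integrable (fun x => |η x|) ν := hintη.abs
  -- bound signedIntegral by integral of |η| against total variation
  have h1 : signedIntegral μ η ≤ ∫ x, |η x| ∂ν := by
    have hpI : Integrable η p := hintgen p
    have hnI : Integrable η n := hintgen n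
    have hp' : ∫ x, η x ∂p ≤ ∫ x, |η x| ∂p :=
      integral_mono hpI hpI.abs fun x => le_abs_self _
    have hn' : -∫ x, η x ∂n ≤ ∫ x, |η x| ∂n := by
      rw [← integral_neg]
      exact integral_mono hnI.neg hnI.abs fun x => neg_le_abs _
    have hadd : ∫ x, |η x| ∂ν = (∫ x, |η x| ∂p) + ∫ x, |η x| ∂n := by
      rw [hνpn, integral_add_measure hpI.abs hnI.abs]
    unfold signedIntegral
    rw [← hp, ← hn]
    linarith
  -- measure decomposition
  have hUsum : (ν U).toReal = ∑ k, (ν (closedBall (t k) r)).toReal := by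
    rw [hU, measure_iUnion hdisj hBmeas, tsum_fintype,
      ENNReal.toReal_sum fun k _ => measure_ne_top ν _]
  have htot : (ν Set.univ).toReal
      = (ν Uᶜ).toReal + ∑ k, (ν (closedBall (t k) r)).toReal := by
    rw [← hUsum, ← ENNReal.toReal_add (measure_ne_top ν _) (measure_ne_top ν _),
      add_comm (ν Uᶜ), measure_add_measure_compl hUmeas]
  -- integral decomposition
  have hIsplit : ∫ x, |η x| ∂ν
      = (∫ x in Uᶜ, |η x| ∂ν) + ∑ k, ∫ x in closedBall (t k) r, |η x| ∂ν := by
    have h2 := integral_add_compl hUmeas hintabs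
    have h3 : ∫ x in U, |η x| ∂ν
        = ∑ k, ∫ x in closedBall (t k) r, |η x| ∂ν := by
      rw [hU, integral_iUnion hBmeas hdisj hintabs.integrableOn, tsum_fintype]
    linarith
  -- far bound
  have hfarb : ∫ x in Uᶜ, |η x| ∂ν ≤ (1 - ε₂ * r ^ 2) * (ν Uᶜ).toReal := by
    have hmono := setIntegral_mono_on hintabs.integrableOn
      (integrableOn_const (C := 1 - ε₂ * r ^ 2) (measure_ne_top _ _) enorm_ne_top)
      hUmeas.compl (fun x hx => hfar x hx)
    simpa [setIntegral_const, smul_eq_mul, mul_comm, measureReal_def] using hmono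
  -- integrability of the squared distance on each ball
  have hd2int : ∀ k, IntegrableOn (fun x => dist x (t k) ^ 2) (closedBall (t k) r) ν := by
    intro k
    refine ⟨(Continuous.aestronglyMeasurable (by continuity)), ?_⟩
    refine HasFiniteIntegral.of_bounded (C := r ^ 2) ?_
    filter_upwards [ae_restrict_mem (hBmeas k)] with x hx
    rw [Real.norm_eq_abs, abs_of_nonneg (by positivity)]
    exact pow_le_pow_left₀ dist_nonneg (mem_closedBall.mp hx) 2
  -- near bound
  have hnearb : ∀ k, ∫ x in closedBall (t k) r, |η x| ∂ν ≤
      (ν (closedBall (t k) r)).toReal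
        - ε₂ * ∫ x in closedBall (t k) r, dist x (t k) ^ 2 ∂ν := by
    intro k
    have hconst : IntegrableOn (fun _ : X => (1 : ℝ)) (closedBall (t k) r) ν :=
      integrableOn_const (measure_ne_top _ _) enorm_ne_top
    have hg : IntegrableOn (fun x => 1 - ε₂ * dist x (t k) ^ 2) (closedBall (t k) r) ν :=
      hconst.sub ((hd2int k).const_mul ε₂)
    have hmono := setIntegral_mono_on hintabs.integrableOn hg (hBmeas k)
      (fun x hx => hnear k x hx)
    have heq : ∫ x in closedBall (t k) r, (1 - ε₂ * dist x (t k) ^ 2) ∂ν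
        = (ν (closedBall (t k) r)).toReal
          - ε₂ * ∫ x in closedBall (t k) r, dist x (t k) ^ 2 ∂ν := by
      rw [integral_sub hconst ((hd2int k).const_mul ε₂), setIntegral_const,
        integral_const_mul]
      simp [measureReal_def]
    linarith [hmono, heq.le, heq.ge]
  have hsumnear : ∑ k, ∫ x in closedBall (t k) r, |η x| ∂ν ≤
      (∑ k, (ν (closedBall (t k) r)).toReal)
        - ε₂ * ∑ k, ∫ x in closedBall (t k) r, dist x (t k) ^ 2 ∂ν := by
    rw [Finset.mul_sum, ← Finset.sum_sub_distrib]
    exact Finset.sum_le_sum fun k _ => hnearb k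
  have hνF : 0 ≤ (ν Uᶜ).toReal := ENNReal.toReal_nonneg
  rw [ge_iff_le]
  nlinarith [h1, hIsplit, htot, hfarb, hsumnear]
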